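/- Let G be an abelian group and (Zₙ)ₙ a countable family of copies of ℤ. Then the natural map G ⊗ ∏ₙ ℤ → ∏ₙ G, sending g ⊗ (xₙ)ₙ to (xₙ·g)ₙ, is injective. -/

import Mathlib

open TensorProduct

/-- The natural bilinear map `G × ∏ₙ ℤ → ∏ₙ G`, `(g, x) ↦ (xₙ • g)ₙ`, as a linear map on the
tensor product `G ⊗[ℤ] ∏ₙ ℤ`. -/
noncomputable def tensorPiIntMap (G : Type*) [AddCommGroup G] :
    G ⊗[ℤ] (ℕ → ℤ) →ₗ[ℤ] (ℕ → G) :=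
  TensorProduct.lift <| LinearMap.mk₂ ℤ (fun (g : G) (x : ℕ → ℤ) (n : ℕ) => x n • g)
    (fun g g' x => by funext n; exact smul_add _ _ _)
    (fun c g x => by funext n; exact (smul_comm c (x n) g).symm)
    (fun g x x' => by funext n; exact add_smul _ _ _)
    (fun c g x => by
      funext n
      show (c * x n) • g = c • (x n • g)
      rw [mul_smul])

noncomputable section ThetaAux

/-- Generalized version of the map for any `ℤ`-module. -/
noncomputable def thetaAux (M : Type*) [AddCommGroup M] [Module ℤ M] :
    M ⊗[ℤ] (ℕ → ℤ) →ₗ[ℤ] (ℕ → M) :=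
  TensorProduct.lift <| LinearMap.mk₂ ℤ (fun (g : M) (x : ℕ → ℤ) (n : ℕ) => x n • g)
    (fun g g' x => by funext n; exact zsmul_add g g' (x n))
    (fun c g x => by
      funext n
      beta_reduce
      rw [Pi.smul_apply]
      simp only [← Int.cast_smul_eq_zsmul ℤ, Int.cast_id, smul_smul]
      module)
    (fun g x x' => by
      funext n
      show (x n + x' n) • g = x n • g + x' n • g
      exact add_zsmul g (x n) (x' n))
    (fun c g x => by
      funext n
      show (c • x) n • g = c • (x n • g)
      have h1 : (c • x) n = c * x n := by
        rw [Pi.smul_apply, smul_eq_mul]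
      rw [h1]
      simp only [← Int.cast_smul_eq_zsmul ℤ, Int.cast_id, mul_smul]
      module)

@[simp] lemma thetaAux_tmul {M : Type*} [AddCommGroup M] [Module ℤ M] (g : M) (x : ℕ → ℤ) :
    thetaAux M (g ⊗ₜ x) = fun n => x n • g := rfl

lemma thetaAux_natural {M N : Type*} [AddCommGroup M] [Module ℤ M] [AddCommGroup N] [Module ℤ N]
    (φ : M →ₗ[ℤ] N) (t : M ⊗[ℤ] (ℕ → ℤ)) :
    thetaAux N (φ.rTensor (ℕ → ℤ) t) = fun n => φ (thetaAux M t n) := by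
  induction t with
  | zero => funext n; simp
  | tmul m x => funext n; simp [map_smul]
  | add a b ha hb => funext n; simp_all

/-- The inverse of `thetaAux` for a finite free module. -/
noncomputable def psiAux (k : ℕ) : (ℕ → (Fin k → ℤ)) →ₗ[ℤ] (Fin k → ℤ) ⊗[ℤ] (ℕ → ℤ) :=
  ∑ i : Fin k, (TensorProduct.mk ℤ (Fin k → ℤ) (ℕ → ℤ) (Pi.single i 1)).comp
    ((LinearMap.proj i : (Fin k → ℤ) →ₗ[ℤ] ℤ).compLeft ℕ)

lemma psiAux_apply (k : ℕ) (h : ℕ → Fin k → ℤ) :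
    psiAux k h = ∑ i : Fin k, (Pi.single i 1 : Fin k → ℤ) ⊗ₜ (fun n => h n i) := by
  simp only [psiAux, LinearMap.sum_apply, LinearMap.comp_apply]
  erw [LinearMap.sum_apply]
  rfl

lemma psiAux_leftInverse (k : ℕ) :
    (psiAux k).comp (thetaAux (Fin k → ℤ)) = LinearMap.id := by
  apply TensorProduct.ext'
  intro v x
  erw [LinearMap.comp_apply, thetaAux_tmul, psiAux_apply, LinearMap.id_apply]
  have key : ∀ i : Fin k, (Pi.single i 1 : Fin k → ℤ) ⊗ₜ[ℤ] (fun n => (x n • v) i)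
      = (Pi.single i (v i) : Fin k → ℤ) ⊗ₜ[ℤ] x := by
    intro i
    have hx : (fun n => (x n • v) i) = (v i) • x := by
      funext n
      simp [Pi.smul_apply, smul_eq_mul, mul_comm]
    rw [hx, tmul_smul, smul_tmul']
    congr 1
    funext j
    simp [Pi.single_apply, mul_comm]
  simp_rw [key, ← sum_tmul, Finset.univ_sum_single]

lemma thetaAux_free_injective (k : ℕ) :
    Function.Injective (thetaAux (Fin k → ℤ)) := by
  intro a b hab
  have h := congrArg (psiAux k) hab
  rwa [← LinearMap.comp_apply, ← LinearMap.comp_apply, psiAux_leftInverse,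
    LinearMap.id_apply, LinearMap.id_apply] at h

lemma thetaAux_free_surjective (k : ℕ) :
    Function.Surjective (thetaAux (Fin k → ℤ)) := by
  intro h
  refine ⟨psiAux k h, ?_⟩
  rw [psiAux_apply, map_sum]
  funext n
  simp only [thetaAux_tmul, Finset.sum_apply]
  rw [← Finset.univ_sum_single (h n)]
  refine Finset.sum_congr rfl fun i _ => ?_
  funext j
  simp only [Pi.smul_apply, smul_eq_mul]
  rcases eq_or_ne j i with rfl | hji
  · simp
  · simp [Pi.single_eq_of_ne hji]

lemma thetaAux_injective_of_finite (M : Type*) [AddCommGroup M] [Module ℤ M]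
    [Module.Finite ℤ M] : Function.Injective (thetaAux M) := by
  rw [← LinearMap.ker_eq_bot, eq_bot_iff]
  intro t ht
  rw [LinearMap.mem_ker] at ht
  obtain ⟨k, g, hg⟩ := Module.Finite.exists_fin' ℤ M
  obtain ⟨m, f', hf'⟩ := Module.Finite.exists_fin' ℤ (LinearMap.ker g)
  set f : (Fin m → ℤ) →ₗ[ℤ] (Fin k → ℤ) := (LinearMap.ker g).subtype.comp f' with hf
  have hrange : LinearMap.range f = LinearMap.ker g := by
    rw [hf, LinearMap.range_comp, LinearMap.range_eq_top.mpr hf', Submodule.map_top,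
      Submodule.range_subtype]
  have hfg : Function.Exact f g := by
    rw [LinearMap.exact_iff, hrange]
  obtain ⟨u, rfl⟩ := LinearMap.rTensor_surjective (ℕ → ℤ) hg t
  have hnat := thetaAux_natural g u
  rw [ht] at hnat
  have hcomp : ∀ n, thetaAux (Fin k → ℤ) u n ∈ LinearMap.range f := by
    intro n
    rw [hrange, LinearMap.mem_ker]
    exact (congrFun hnat n).symm
  choose w hw using fun n => hcomp n
  obtain ⟨v, hv⟩ := thetaAux_free_surjective m w
  have hfv : f.rTensor (ℕ → ℤ) v = u := by
    apply thetaAux_free_injective k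
    rw [thetaAux_natural f v]
    funext n
    rw [congrFun hv n, hw n]
  rw [Submodule.mem_bot, ← hfv]
  exact (rTensor_exact (ℕ → ℤ) hfg hg).apply_apply_eq_zero v

lemma thetaAux_injective (M : Type*) [AddCommGroup M] [Module ℤ M] :
    Function.Injective (thetaAux M) := by
  rw [← LinearMap.ker_eq_bot, eq_bot_iff]
  intro t ht
  rw [LinearMap.mem_ker] at ht
  obtain ⟨s, rfl⟩ := TensorProduct.exists_finset t
  set M' : Submodule ℤ M := Submodule.span ℤ (Prod.fst '' (s : Set (M × (ℕ → ℤ)))) with hM'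
  letI instM' : Module ℤ ↥M' := M'.module
  haveI : Module.Finite ℤ M' :=
    Module.Finite.iff_fg.mpr (Submodule.fg_span ((s.finite_toSet.image _)))
  set t' : M' ⊗[ℤ] (ℕ → ℤ) := ∑ p ∈ s.attach,
    (⟨p.1.1, Submodule.subset_span ⟨p.1, p.2, rfl⟩⟩ : M') ⊗ₜ p.1.2 with ht'
  have hmap : M'.subtype.rTensor (ℕ → ℤ) t' = ∑ p ∈ s, p.1 ⊗ₜ p.2 := by
    rw [ht', map_sum, ← Finset.sum_attach s (fun p => p.1 ⊗ₜ[ℤ] p.2)]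
    exact Finset.sum_congr rfl fun p _ => by simp [LinearMap.rTensor_tmul]
  have ht'0 : t' = 0 := by
    apply thetaAux_injective_of_finite M'
    rw [map_zero]
    have hnat := thetaAux_natural M'.subtype t'
    rw [hmap, ht] at hnat
    funext n
    exact Subtype.ext ((congrFun hnat n).symm)
  rw [Submodule.mem_bot, ← hmap, ht'0, map_zero]

end ThetaAux

/-- For any abelian group `G`, the natural map `G ⊗ ∏ₙ ℤ → ∏ₙ G` sending
`g ⊗ (xₙ)ₙ` to `(xₙ • g)ₙ` is injective. -/
theorem tensorPiIntMap_injective (G : Type*) [AddCommGroup G] :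
    Function.Injective (tensorPiIntMap G) := by
  have : tensorPiIntMap G = thetaAux G := rfl
  rw [this]
  exact thetaAux_injective G
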